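/- For the Lie algebra gl_N acting diagonally by the adjoint action on S(gl_N)^{⊗p}, every necklace element x_μ is invariant: for every X ∈ gl_N, X · x_μ = 0. -/

import Mathlib

open MvPolynomial

/-- Matrix unit `e_{ij}` in `gl_N`. -/
noncomputable def glE (F : Type) [Field F] (N : ℕ) (i j : Fin N) :
    Matrix (Fin N) (Fin N) F := Matrix.single i j 1

/-- The necklace element `x_μ` of a `p`-colored necklace `μ` of order `n`, as an element of
`S(gl_N)^{⊗p}`, where the latter is modelled as the polynomial algebra on `p` copies of the
basis `e_{ij}` of `gl_N`: variable `(s, i, j)` is the generator `e_{ij}` in tensor slot `s`. -/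
noncomputable def neck (F : Type) [Field F] (p N n : ℕ) (hn : 0 < n) (μ : ℕ → Fin p) :
    MvPolynomial (Fin p × Fin N × Fin N) F :=
  ∑ i : Fin n → Fin N, ∏ m : Fin n,
    X (μ m.val, i m, i ⟨(m.val + 1) % n, Nat.mod_lt _ hn⟩)

/-- The diagonal adjoint action of `X ∈ gl_N` on `S(gl_N)^{⊗p}`, given by the derivation
extending `ad X` in every tensor slot: the generator `e_{ij}` in slot `s` is sent to the
element of slot `s` corresponding to `[X, e_{ij}] ∈ gl_N`. -/
noncomputable def adDer (F : Type) [Field F] (p N : ℕ) (Y : Matrix (Fin N) (Fin N) F) :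
    Derivation F (MvPolynomial (Fin p × Fin N × Fin N) F)
      (MvPolynomial (Fin p × Fin N × Fin N) F) :=
  MvPolynomial.mkDerivation F fun q =>
    ∑ a : Fin N, ∑ b : Fin N, (⁅Y, glE F N q.2.1 q.2.2⁆ a b) • X (q.1, a, b)

/-- Leibniz rule for a derivation applied to a finite product. -/
lemma Derivation.finset_prod {F A ι : Type*} [CommRing F] [CommRing A] [Algebra F A]
    [DecidableEq ι] (D : Derivation F A A) (s : Finset ι) (f : ι → A) :
    D (∏ x ∈ s, f x) = ∑ x ∈ s, D (f x) * ∏ y ∈ s.erase x, f y := by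
  induction s using Finset.induction_on with
  | empty => simp
  | @insert a s ha ih =>
    rw [Finset.prod_insert ha, D.leibniz, ih, Finset.sum_insert ha, Finset.erase_insert ha]
    rw [smul_eq_mul, smul_eq_mul, Finset.mul_sum, add_comm]
    congr 1
    · ring
    · refine Finset.sum_congr rfl fun x hx => ?_
      have hxa : x ≠ a := by rintro rfl; exact ha hx
      rw [Finset.erase_insert_of_ne hxa.symm,
        Finset.prod_insert (fun h => ha (Finset.mem_of_mem_erase h))]
      ring

/-- The adjoint derivation on a single generator. -/
lemma adDer_X (F : Type) [Field F] (p N : ℕ) (Y : Matrix (Fin N) (Fin N) F)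
    (s : Fin p) (k l : Fin N) :
    adDer F p N Y (X (s, k, l)) =
      (∑ a, Y a k • (X (s, a, l) : MvPolynomial (Fin p × Fin N × Fin N) F))
        - ∑ b, Y l b • X (s, k, b) := by
  rw [adDer, mkDerivation_X]
  have hbr : ∀ a b : Fin N, ⁅Y, glE F N k l⁆ a b
      = (if b = l then Y a k else 0) - (if a = k then Y l b else 0) := by
    intro a b
    rw [Ring.lie_def, Matrix.sub_apply, glE]
    congr 1
    · by_cases hb : b = l
      · subst hb; simp
      · simp [hb]
    · by_cases ha : a = k
      · subst ha; simp
      · simp [ha]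
  simp only [hbr, sub_smul, ite_smul, zero_smul, Finset.sum_sub_distrib,
    Finset.sum_ite_eq', Finset.mem_univ, if_true]
  congr 1
  rw [Finset.sum_comm]
  simp

set_option maxHeartbeats 1000000 in
/-- Every necklace element is invariant under the diagonal adjoint action of `gl_N`. -/
theorem necklace_invariant (F : Type) [Field F] [CharZero F] (p N n : ℕ) (hp : 0 < p)
    (hn : 0 < n) (μ : ℕ → Fin p) (Y : Matrix (Fin N) (Fin N) F) :
    adDer F p N Y (neck F p N n hn μ) = 0 := by
  classical
  haveI : NeZero n := ⟨hn.ne'⟩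
  have hidx : ∀ m : Fin n, (⟨(m.val + 1) % n, Nat.mod_lt _ hn⟩ : Fin n) = m + 1 := by
    intro m
    ext
    simp only [Fin.add_def, Fin.val_one']
    rw [Nat.add_mod m.val (1 % n) n, Nat.mod_mod_of_dvd 1 dvd_rfl, ← Nat.add_mod]
  have hneck : neck F p N n hn μ
      = ∑ i : Fin n → Fin N, ∏ m : Fin n, X (μ m.val, i m, i (m + 1)) := by
    unfold neck
    exact Finset.sum_congr rfl fun i _ => Finset.prod_congr rfl fun m _ => by rw [hidx]
  -- Expand the derivation of each product, rewriting each summand as a full product with `if`s.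
  have expand : ∀ i : Fin n → Fin N,
      adDer F p N Y (∏ m : Fin n, X (μ m.val, i m, i (m + 1)))
      = ∑ m : Fin n,
          ((∑ a : Fin N, Y a (i m) •
              ∏ m' : Fin n, X (μ m'.val, if m' = m then a else i m', i (m' + 1)))
          - (∑ b : Fin N, Y (i (m + 1)) b •
              ∏ m' : Fin n, X (μ m'.val, i m', if m' = m then b else i (m' + 1)))) := by
    intro i
    rw [Derivation.finset_prod]
    refine Finset.sum_congr rfl fun m _ => ?_
    rw [adDer_X, sub_mul, Finset.sum_mul, Finset.sum_mul]
    congr 1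
    · refine Finset.sum_congr rfl fun a _ => ?_
      rw [smul_mul_assoc]
      congr 1
      rw [← Finset.mul_prod_erase Finset.univ _ (Finset.mem_univ m), if_pos rfl]
      congr 1
      exact Finset.prod_congr rfl fun x hx => by rw [if_neg (Finset.ne_of_mem_erase hx)]
    · refine Finset.sum_congr rfl fun b _ => ?_
      rw [smul_mul_assoc]
      congr 1
      rw [← Finset.mul_prod_erase Finset.univ _ (Finset.mem_univ m), if_pos rfl]
      congr 1
      exact Finset.prod_congr rfl fun x hx => by rw [if_neg (Finset.ne_of_mem_erase hx)]
  have step1 : adDer F p N Y (neck F p N n hn μ)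
      = (∑ m : Fin n, ∑ i : Fin n → Fin N, ∑ a : Fin N, Y a (i m) •
            ∏ m' : Fin n, X (μ m'.val, if m' = m then a else i m', i (m' + 1)))
        - (∑ m : Fin n, ∑ i : Fin n → Fin N, ∑ b : Fin N, Y (i (m + 1)) b •
            ∏ m' : Fin n, X (μ m'.val, i m', if m' = m then b else i (m' + 1))) := by
    rw [hneck]
    rw [_root_.map_sum (adDer F p N Y)
      (fun i : Fin n → Fin N => ∏ m : Fin n, (X (μ m.val, i m, i (m + 1)) : MvPolynomial (Fin p × Fin N × Fin N) F)) Finset.univ]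
    simp only [expand, Finset.sum_sub_distrib]
    congr 1 <;> exact Finset.sum_comm
  -- The key cancellation: the positive term at `m + 1` equals the negative term at `m`.
  have step2 : ∀ m : Fin n,
      (∑ i : Fin n → Fin N, ∑ a : Fin N, Y a (i (m + 1)) •
          ∏ m' : Fin n, (X (μ m'.val, if m' = m + 1 then a else i m', i (m' + 1)) :
            MvPolynomial (Fin p × Fin N × Fin N) F))
      = ∑ i : Fin n → Fin N, ∑ b : Fin N, Y (i (m + 1)) b •
          ∏ m' : Fin n, X (μ m'.val, i m', if m' = m then b else i (m' + 1)) := by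
    intro m
    have e1 : (∑ x : (Fin n → Fin N) × Fin N, Y x.2 (x.1 (m + 1)) •
          ∏ m' : Fin n, (X (μ m'.val, if m' = m + 1 then x.2 else x.1 m', x.1 (m' + 1)) :
            MvPolynomial (Fin p × Fin N × Fin N) F))
        = ∑ i : Fin n → Fin N, ∑ a : Fin N, Y a (i (m + 1)) •
          ∏ m' : Fin n, X (μ m'.val, if m' = m + 1 then a else i m', i (m' + 1)) := by
      rw [Fintype.sum_prod_type]
    have e2 : (∑ x : (Fin n → Fin N) × Fin N, Y (x.1 (m + 1)) x.2 •
          ∏ m' : Fin n, (X (μ m'.val, x.1 m', if m' = m then x.2 else x.1 (m' + 1)) :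
            MvPolynomial (Fin p × Fin N × Fin N) F))
        = ∑ i : Fin n → Fin N, ∑ b : Fin N, Y (i (m + 1)) b •
          ∏ m' : Fin n, X (μ m'.val, i m', if m' = m then b else i (m' + 1)) := by
      rw [Fintype.sum_prod_type]
    rw [← e1, ← e2]
    have hg : Function.Involutive
        (fun x : (Fin n → Fin N) × Fin N =>
          ((Function.update x.1 (m + 1) x.2, x.1 (m + 1)) : (Fin n → Fin N) × Fin N)) := by
      intro x
      simp [Function.update_idem, Function.update_eq_self]
    refine Fintype.sum_equiv hg.toPerm _ _ ?_
    rintro ⟨i, a⟩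
    show Y a (i (m + 1)) •
        (∏ m' : Fin n, X (μ m'.val, if m' = m + 1 then a else i m', i (m' + 1)))
      = Y (Function.update i (m + 1) a (m + 1)) (i (m + 1)) •
        ∏ m' : Fin n, X (μ m'.val, Function.update i (m + 1) a m',
          if m' = m then i (m + 1) else Function.update i (m + 1) a (m' + 1))
    rw [Function.update_self]
    congr 1
    refine Finset.prod_congr rfl fun m' _ => ?_
    have h1 : (if m' = m + 1 then a else i m') = Function.update i (m + 1) a m' :=
      (Function.update_apply i (m + 1) a m').symm
    have h2 : i (m' + 1)
        = if m' = m then i (m + 1) else Function.update i (m + 1) a (m' + 1) := by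
      by_cases h : m' = m
      · subst h; rw [if_pos rfl]
      · rw [if_neg h, Function.update_of_ne (fun hh => h (add_right_cancel hh))]
    rw [h1, h2]
  rw [step1, sub_eq_zero]
  exact (Fintype.sum_equiv (Equiv.addRight 1) _ _ (fun m => (step2 m).symm)).symm
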